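/- For every real number α > 0, the coefficient T₂,₀(α) = (α² − 2α c₀² + (1 − 2α²)c₀⁴ − 2α c₀⁶ + α² c₀⁸)/(4c₀²) is strictly negative, where c₀ = √(tanh α). -/

import Mathlib

/-- `c₀ = √(tanh α)`, the leading-order wave speed. -/
noncomputable def c₀ (α : ℝ) : ℝ := Real.sqrt (Real.tanh α)

/-- `sinh x < x * cosh x` for `x > 0`, i.e. `tanh x < x`. -/
lemma sinh_lt_mul_cosh (x : ℝ) (hx : 0 < x) : Real.sinh x < x * Real.cosh x := by
  have hd : ∀ y : ℝ, HasDerivAt (fun z => z * Real.cosh z - Real.sinh z)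
      (y * Real.sinh y) y := by
    intro y
    have h1 : HasDerivAt (fun z : ℝ => z * Real.cosh z)
        (1 * Real.cosh y + y * Real.sinh y) y :=
      (hasDerivAt_id y).mul (Real.hasDerivAt_cosh y)
    have h2 := h1.sub (Real.hasDerivAt_sinh y)
    exact h2.congr_deriv (by ring)
  have hmono : StrictMonoOn (fun z : ℝ => z * Real.cosh z - Real.sinh z) (Set.Ici 0) := by
    apply strictMonoOn_of_deriv_pos (convex_Ici 0)
    · exact (Continuous.sub (continuous_id.mul Real.continuous_cosh)
        Real.continuous_sinh).continuousOn
    · intro y hy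
      rw [interior_Ici] at hy
      rw [(hd y).deriv]
      exact mul_pos hy (Real.sinh_pos_iff.2 hy)
  have := hmono (Set.self_mem_Ici) (Set.mem_Ici.2 hx.le) hx
  simpa using this

/-- For every real `α > 0`, the coefficient
`T₂,₀(α) = (α² − 2α c₀² + (1 − 2α²)c₀⁴ − 2α c₀⁶ + α² c₀⁸)/(4c₀²)` is strictly negative. -/
theorem T20_neg (α : ℝ) (hα : 0 < α) :
    (α ^ 2 - 2 * α * c₀ α ^ 2 + (1 - 2 * α ^ 2) * c₀ α ^ 4 - 2 * α * c₀ α ^ 6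
        + α ^ 2 * c₀ α ^ 8) / (4 * c₀ α ^ 2) < 0 := by
  set s := Real.sinh α with hs_def
  set c := Real.cosh α with hc_def
  have hs : 0 < s := Real.sinh_pos_iff.2 hα
  have hc : 0 < c := Real.cosh_pos α
  have hc1 : 1 ≤ c := Real.one_le_cosh α
  have hpyth : c ^ 2 - s ^ 2 = 1 := by
    simpa [hs_def, hc_def, sq] using Real.cosh_sq_sub_sinh_sq α
  have hαs : α < s := Real.self_lt_sinh_iff.2 hα
  have hsc : s < α * c := sinh_lt_mul_cosh α hα
  have htanh : Real.tanh α = s / c := Real.tanh_eq_sinh_div_cosh α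
  have ht_pos : 0 < Real.tanh α := by rw [htanh]; positivity
  set t := Real.tanh α with ht_def
  have hc0 : c₀ α ^ 2 = t := Real.sq_sqrt ht_pos.le
  have ht : t = s / c := htanh
  have ht1 : t < 1 := by
    rw [ht, div_lt_one hc]
    nlinarith
  -- key inequalities
  have h1 : α * (1 - t ^ 2) < t := by
    rw [ht]
    have : 1 - (s / c) ^ 2 = 1 / c ^ 2 := by
      field_simp
      nlinarith
    rw [this, mul_one_div, div_lt_div_iff₀ (by positivity) hc]
    nlinarith
  have h2 : t < α := by
    rw [ht, div_lt_iff₀ hc]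
    linarith
  -- numerator is negative
  have hnum : α ^ 2 - 2 * α * t + (1 - 2 * α ^ 2) * t ^ 2 - 2 * α * t ^ 3
      + α ^ 2 * t ^ 4 < 0 := by
    have key : α ^ 2 - 2 * α * t + (1 - 2 * α ^ 2) * t ^ 2 - 2 * α * t ^ 3 + α ^ 2 * t ^ 4
        = (α * (1 - t ^ 2) - t) * (α * (1 - t ^ 2) + t) + 2 * t * (t - α * (1 + t ^ 2)) := by
      ring
    rw [key]
    have h1t2 : 0 < 1 - t ^ 2 := by nlinarith
    have hA : α * (1 - t ^ 2) - t < 0 := by linarith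
    have hB : 0 < α * (1 - t ^ 2) + t := by nlinarith [mul_pos hα h1t2]
    have hC : t - α * (1 + t ^ 2) < 0 := by nlinarith
    nlinarith [mul_pos ht_pos (neg_pos.2 hC)]
  have hden : 0 < 4 * c₀ α ^ 2 := by rw [hc0]; linarith
  apply div_neg_of_neg_of_pos _ hden
  have e4 : c₀ α ^ 4 = t ^ 2 := by rw [show (4:ℕ) = 2*2 from rfl, pow_mul, hc0]
  have e6 : c₀ α ^ 6 = t ^ 3 := by rw [show (6:ℕ) = 2*3 from rfl, pow_mul, hc0]
  have e8 : c₀ α ^ 8 = t ^ 4 := by rw [show (8:ℕ) = 2*4 from rfl, pow_mul, hc0]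
  rw [hc0, e4, e6, e8]
  exact hnum
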